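/- arXiv:1512.08786 — 7 statements merged into one kernel-verified Lean document; each statement's English description precedes it below -/
import Mathlib

section
/- Let K be a number field of degree n and let β be a nonzero algebraic integer of K. If Log(β) ∈ Q_k for some index k ≤ r₁ (so that φ_k is a real embedding), then K = ℚ(β); moreover, if φ_k(β) > 0, then φ_k(β) is a Pisot number. -/
open Polynomial NumberField

noncomputable section

/-- A Pisot number: a real algebraic integer `θ > 1` all of whose other conjugates over `ℚ`
have modulus strictly smaller than `1`. -/
def IsPisotNumber (θ : ℝ) : Prop :=
  1 < θ ∧ IsIntegral ℤ θ ∧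
    ∀ z : ℂ, aeval z (minpoly ℚ θ) = 0 → z ≠ (θ : ℂ) → ‖z‖ < 1

/-- A Salem number: a real algebraic integer `θ > 1` all of whose other conjugates over `ℚ`
have modulus at most `1`, with at least one conjugate of modulus exactly `1`. -/
def IsSalemNumber (θ : ℝ) : Prop :=
  1 < θ ∧ IsIntegral ℤ θ ∧
    (∀ z : ℂ, aeval z (minpoly ℚ θ) = 0 → z ≠ (θ : ℂ) → ‖z‖ ≤ 1) ∧
    (∃ z : ℂ, aeval z (minpoly ℚ θ) = 0 ∧ ‖z‖ = 1)

/-- A complex Pisot number: a non-real algebraic integer `θ` with `|θ| > 1` all of whose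
conjugates over `ℚ` other than `θ` and `conj θ` have modulus strictly smaller than `1`. -/
def IsComplexPisotNumber (θ : ℂ) : Prop :=
  θ.im ≠ 0 ∧ 1 < ‖θ‖ ∧ IsIntegral ℤ θ ∧
    ∀ z : ℂ, aeval z (minpoly ℚ θ) = 0 → z ≠ θ → z ≠ (starRingEnd ℂ) θ → ‖z‖ < 1

variable {K : Type*} [Field K]

/-- The `Log` map `x ↦ (log|σ₁ x|, …, log|σ_{r₁} x|, 2 log|τ₁ x|, …, 2 log|τ_{r₂} x|)`,
indexed by `Fin r₁ ⊕ Fin r₂` (real embeddings first, then representatives of the complex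
conjugate pairs). -/
def LogMap {r₁ r₂ : ℕ} (σ : Fin r₁ → (K →+* ℂ)) (τ : Fin r₂ → (K →+* ℂ)) (x : K) :
    Fin r₁ ⊕ Fin r₂ → ℝ :=
  Sum.elim (fun i => Real.log ‖σ i x‖)
    (fun i => 2 * Real.log ‖τ i x‖)

/-- `σ` is the family of the real embeddings of `K` and `τ` a system of representatives of the
conjugate pairs of non-real embeddings: each `σ i` is real-valued, each `τ i` is not, and
`σ, τ, conj ∘ τ` together enumerate all embeddings `K →+* ℂ` without repetition. -/
def IsEmbeddingSystem {r₁ r₂ : ℕ} (σ : Fin r₁ → (K →+* ℂ)) (τ : Fin r₂ → (K →+* ℂ)) : Prop :=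
  (∀ i, ∀ x : K, ((σ i) x).im = 0) ∧
  (∀ i, ∃ x : K, ((τ i) x).im ≠ 0) ∧
  Function.Bijective
    (Sum.elim σ (Sum.elim τ (fun i => (starRingEnd ℂ).comp (τ i))) :
      Fin r₁ ⊕ (Fin r₂ ⊕ Fin r₂) → (K →+* ℂ))

/-- The open region `Q_k = {v : v_k > 0 and v_j < 0 for all j ≠ k}`. -/
def PosQuadrant {ι : Type*} (k : ι) : Set (ι → ℝ) :=
  {v | 0 < v k ∧ ∀ j, j ≠ k → v j < 0}

/-- The half line `l_{k,j} = {v : v_k > 0, v_j = -v_k, v_i = 0 for i ≠ k, j}`. -/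
def SalemLine {ι : Type*} (k j : ι) : Set (ι → ℝ) :=
  {v | 0 < v k ∧ v j = -v k ∧ ∀ i, i ≠ k → i ≠ j → v i = 0}

/-- Proposition, part 1. If `β` is a nonzero algebraic integer of a number
field `K` of degree `n = r₁ + 2r₂` and `Log β ∈ Q_k` for an index `k` corresponding to a real
embedding `φ_k = σ i`, then `K = ℚ(β)`; moreover if `φ_k(β) > 0` then `φ_k(β)` is a Pisot
number. -/
theorem pisot_of_logMap_mem_posQuadrant_real
    {K : Type*} [Field K] [NumberField K] {r₁ r₂ : ℕ}
    (σ : Fin r₁ → (K →+* ℂ)) (τ : Fin r₂ → (K →+* ℂ))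
    (hsys : IsEmbeddingSystem σ τ)
    (hdeg : Module.finrank ℚ K = r₁ + 2 * r₂)
    (β : K) (hβ : β ≠ 0) (hint : IsIntegral ℤ β)
    (i : Fin r₁)
    (hQ : LogMap σ τ β ∈ PosQuadrant (Sum.inl i : Fin r₁ ⊕ Fin r₂)) :
    IntermediateField.adjoin ℚ {β} = ⊤ ∧
      (0 < ((σ i) β).re → IsPisotNumber ((σ i) β).re) := by
  have habs : ∀ φ : K →+* ℂ, 0 < ‖φ β‖ := fun φ => by
    simpa using (map_ne_zero φ).mpr hβ
  -- all embeddings other than σ i are small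
  have hsmall : ∀ φ : K →+* ℂ, φ ≠ σ i → ‖φ β‖ < 1 := by
    intro φ hφ
    obtain ⟨e, rfl⟩ := hsys.2.2.2 φ
    rcases e with j | j | j
    · have hj : j ≠ i := fun h => hφ (by simp [h])
      have := hQ.2 (Sum.inl j) (by simpa using hj)
      simpa [LogMap] using (Real.log_neg_iff (habs _)).mp (by simpa [LogMap] using this)
    · have := hQ.2 (Sum.inr j) (by simp)
      simp only [LogMap, Sum.elim_inr] at this
      have hlog : Real.log (‖τ j β‖) < 0 := by linarith
      simpa using (Real.log_neg_iff (habs _)).mp hlog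
    · have := hQ.2 (Sum.inr j) (by simp)
      simp only [LogMap, Sum.elim_inr] at this
      have hlog : Real.log (‖τ j β‖) < 0 := by linarith
      have h1 : ‖τ j β‖ < 1 := (Real.log_neg_iff (habs _)).mp hlog
      simpa [Complex.norm_conj] using h1
  have hbig : 1 < ‖(σ i) β‖ := by
    have := hQ.1
    simp only [LogMap, Sum.elim_inl, PosQuadrant] at this
    exact (Real.log_pos_iff (habs _).le).mp this
  set F := IntermediateField.adjoin ℚ {β} with hF
  have hβF : β ∈ F := IntermediateField.mem_adjoin_simple_self ℚ β
  letI : Algebra F ℂ := ((σ i).comp (algebraMap F K)).toAlgebra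
  have hgβ : ∀ g : K →ₐ[F] ℂ, g β = (σ i) β := by
    intro g
    have h := g.commutes ⟨β, hβF⟩
    have e1 : algebraMap F K ⟨β, hβF⟩ = β := rfl
    have e2 : algebraMap F ℂ ⟨β, hβF⟩ = (σ i) β := rfl
    rw [e1, e2] at h
    exact h
  have hrank : Module.finrank F K = 1 := by
    by_contra h
    have hne1 : Module.finrank F K ≠ 1 := h
    have h2 : 2 ≤ Fintype.card (K →ₐ[F] ℂ) := by
      rw [AlgHom.card F K ℂ]
      have := Module.finrank_pos (R := F) (M := K)
      omega
    obtain ⟨g₁, g₂, hne⟩ := Fintype.exists_pair_of_one_lt_card (α := K →ₐ[F] ℂ) (by omega)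
    have hne' : (g₁ : K →+* ℂ) ≠ (g₂ : K →+* ℂ) := fun h =>
      hne (AlgHom.coe_ringHom_injective h)
    have : ∃ ψ : K →ₐ[F] ℂ, (ψ : K →+* ℂ) ≠ σ i := by
      by_contra hc
      push_neg at hc
      exact hne' ((hc g₁).trans (hc g₂).symm)
    obtain ⟨ψ, hψ⟩ := this
    have := hsmall ψ hψ
    rw [show (ψ : K →+* ℂ) β = ψ β from rfl, hgβ ψ] at this
    linarith
  have htop : F = ⊤ := by
    have hfr : Module.finrank ℚ F = Module.finrank ℚ K := by
      have := Module.finrank_mul_finrank ℚ F K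
      rw [hrank, mul_one] at this
      exact this
    have : F.toSubalgebra = ⊤ := by
      apply Subalgebra.toSubmodule_injective
      apply Submodule.eq_top_of_finrank_eq
      exact hfr
    exact IntermediateField.toSubalgebra_injective (by simpa using this)
  refine ⟨htop, fun hpos => ?_⟩
  have hre : (((σ i) β).re : ℂ) = (σ i) β := by
    apply Complex.ext <;> simp [hsys.1 i β]
  have habseq : ‖(σ i) β‖ = ((σ i) β).re := by
    conv_lhs => rw [← hre]
    rw [Complex.norm_real, Real.norm_eq_abs, abs_of_pos hpos]
  have hθint : IsIntegral ℤ ((σ i) β).re := by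
    have h1 : IsIntegral ℤ ((σ i) β) := hint.map (σ i).toIntAlgHom
    rw [← hre] at h1
    exact (isIntegral_algebraMap_iff Complex.ofReal_injective).mp h1
  refine ⟨by rw [← habseq]; exact hbig, hθint, ?_⟩
  intro z hz hzne
  have hmin : minpoly ℚ (((σ i) β).re) = minpoly ℚ β := by
    have e1 : minpoly ℚ ((((σ i) β).re : ℂ)) = minpoly ℚ (((σ i) β).re) :=
      minpoly.algHom_eq (Complex.ofRealAm.restrictScalars ℚ) Complex.ofReal_injective _
    have e2 : minpoly ℚ ((σ i) β) = minpoly ℚ β :=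
      minpoly.algHom_eq (σ i).toRatAlgHom (σ i).injective β
    rw [← e1, hre, e2]
  rw [hmin] at hz
  have hβℚ : IsIntegral ℚ β := hint.tower_top
  have hzroot : z ∈ (minpoly ℚ β).rootSet ℂ := by
    rw [Polynomial.mem_rootSet]
    exact ⟨minpoly.ne_zero hβℚ, hz⟩
  rw [← NumberField.Embeddings.range_eval_eq_rootSet_minpoly K ℂ β] at hzroot
  obtain ⟨φ, rfl⟩ := hzroot
  have hφne : φ ≠ σ i := by
    intro h
    apply hzne
    rw [h, hre]
  exact hsmall φ hφne
end
end

section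
/- Let K be a number field of degree n and let β be a nonzero algebraic integer of K. If Log(β) ∈ Q_k for some index k > r₁ (so that φ_k is a complex embedding) and φ_k(β) ∈ ℝ, then [K : ℚ(β)] = 2; moreover, if φ_k(β) > 0, then φ_k(β) is a Pisot number. -/
open Polynomial NumberField

noncomputable section

variable {K : Type*} [Field K]

/-- Proposition, part 4. If `β` is a nonzero algebraic integer of a number
field `K` of degree `n = r₁ + 2r₂`, `Log β ∈ Q_k` for an index `k` corresponding to a complex
embedding `φ_k = τ i`, and `φ_k(β) ∈ ℝ`, then `[K : ℚ(β)] = 2`; moreover if `φ_k(β) > 0` then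
`φ_k(β)` is a Pisot number. -/
theorem index_two_of_logMap_mem_posQuadrant_complex_real_image
    {K : Type*} [Field K] [NumberField K] {r₁ r₂ : ℕ}
    (σ : Fin r₁ → (K →+* ℂ)) (τ : Fin r₂ → (K →+* ℂ))
    (hsys : IsEmbeddingSystem σ τ)
    (hdeg : Module.finrank ℚ K = r₁ + 2 * r₂)
    (β : K) (hβ : β ≠ 0) (hint : IsIntegral ℤ β)
    (i : Fin r₂)
    (hQ : LogMap σ τ β ∈ PosQuadrant (Sum.inr i : Fin r₁ ⊕ Fin r₂))
    (hreal : ((τ i) β).im = 0) :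
    Module.finrank (IntermediateField.adjoin ℚ {β}) K = 2 ∧
      (0 < ((τ i) β).re → IsPisotNumber ((τ i) β).re) := by
  obtain ⟨hσreal, hτim, hbij⟩ := hsys
  have hβQ : IsIntegral ℚ β := IsIntegral.of_finite ℚ β
  -- absolute value facts from hQ
  have habsne : ∀ φ : K →+* ℂ, φ β ≠ 0 := fun φ h => hβ (by
    have := φ.injective (h.trans (map_zero φ).symm); exact this)
  have habs_i : 1 < ‖τ i β‖ := by
    have h1 := hQ.1
    simp only [LogMap, Sum.elim_inr] at h1
    have hpos : (0:ℝ) < ‖τ i β‖ := norm_pos_iff.mpr (habsne (τ i))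
    exact (Real.log_pos_iff hpos.le).mp (by linarith)
  have habs_σ : ∀ j, ‖σ j β‖ < 1 := by
    intro j
    have h1 := hQ.2 (Sum.inl j) (by simp)
    simp only [LogMap, Sum.elim_inl] at h1
    have hpos : (0:ℝ) < ‖σ j β‖ := norm_pos_iff.mpr (habsne (σ j))
    exact (Real.log_neg_iff hpos).mp h1
  have habs_τ : ∀ j, j ≠ i → ‖τ j β‖ < 1 := by
    intro j hj
    have h1 := hQ.2 (Sum.inr j) (by simpa using hj)
    simp only [LogMap, Sum.elim_inr] at h1
    have hpos : (0:ℝ) < ‖τ j β‖ := norm_pos_iff.mpr (habsne (τ j))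
    exact (Real.log_neg_iff hpos).mp (by linarith)
  have hconjreal : (starRingEnd ℂ) ((τ i) β) = (τ i) β := Complex.conj_eq_iff_im.mpr hreal
  -- the only embeddings with |φ β| ≥ 1 are τ i and its conjugate
  have key : ∀ φ : K →+* ℂ, 1 ≤ ‖φ β‖ →
      φ = τ i ∨ φ = (starRingEnd ℂ).comp (τ i) := by
    intro φ hφ
    obtain ⟨s, rfl⟩ := hbij.2 φ
    rcases s with j | j | j
    · exact absurd (lt_of_lt_of_le (habs_σ j) (by simpa using hφ)) (lt_irrefl _)
    · rcases eq_or_ne j i with rfl | hj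
      · exact Or.inl rfl
      · exact absurd (lt_of_lt_of_le (habs_τ j hj) (by simpa using hφ)) (lt_irrefl _)
    · rcases eq_or_ne j i with rfl | hj
      · exact Or.inr rfl
      · refine absurd (lt_of_lt_of_le (habs_τ j hj) ?_) (lt_irrefl _)
        simpa using hφ
  -- τ i is real-valued on ℚ⟮β⟯
  have hτF : ∀ x : K, x ∈ IntermediateField.adjoin ℚ {β} →
      (starRingEnd ℂ) ((τ i) x) = (τ i) x := by
    intro x hx
    have h1 : (IntermediateField.adjoin ℚ {β}).toSubalgebra = Algebra.adjoin ℚ {β} :=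
      IntermediateField.adjoin_simple_toSubalgebra_of_isAlgebraic hβQ.isAlgebraic
    have hx' : x ∈ Algebra.adjoin ℚ {β} := by
      rw [← h1]; exact hx
    have hle : Algebra.adjoin ℚ {β} ≤
        AlgHom.equalizer (((starRingEnd ℂ).comp (τ i)).toRatAlgHom) ((τ i).toRatAlgHom) := by
      refine Algebra.adjoin_le ?_
      intro y hy
      rcases hy with rfl
      exact hconjreal
    exact hle hx'
  set F := IntermediateField.adjoin ℚ {β} with hF
  have hβF : β ∈ F := IntermediateField.mem_adjoin_simple_self ℚ β
  letI : Algebra F ℂ := ((τ i : K →+* ℂ).comp (algebraMap F K)).toAlgebra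
  haveI : FiniteDimensional F K := FiniteDimensional.right ℚ F K
  -- the two F-algebra homs
  let A : K →ₐ[F] ℂ := { (τ i : K →+* ℂ) with commutes' := fun x => rfl }
  let B : K →ₐ[F] ℂ := { ((starRingEnd ℂ).comp (τ i) : K →+* ℂ) with
    commutes' := fun x => hτF x x.2 }
  have hAB : A ≠ B := by
    obtain ⟨x, hx⟩ := hτim i
    intro h
    have : (τ i) x = (starRingEnd ℂ) ((τ i) x) := by
      have := congrFun (congrArg (fun f : K →ₐ[F] ℂ => (f : K → ℂ)) h) x
      exact this
    exact hx (Complex.conj_eq_iff_im.mp this.symm)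
  have hAll : ∀ g : K →ₐ[F] ℂ, g = A ∨ g = B := by
    intro g
    have hgβ : g β = (τ i) β := by
      have h1 := g.commutes ⟨β, hβF⟩
      exact h1
    have hg1 : 1 ≤ ‖g.toRingHom β‖ := by
      rw [show g.toRingHom β = g β from rfl, hgβ]; exact le_of_lt habs_i
    rcases key g.toRingHom hg1 with h | h
    · left; ext x; exact congrFun (congrArg (fun f : K →+* ℂ => (f : K → ℂ)) h) x
    · right; ext x; exact congrFun (congrArg (fun f : K →+* ℂ => (f : K → ℂ)) h) x
  have hcard : Module.finrank F K = 2 := by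
    rw [← AlgHom.card F K ℂ, ← Nat.card_eq_fintype_card, Nat.card_eq_two_iff]
    refine ⟨A, B, hAB, ?_⟩
    ext g
    simp only [Set.mem_insert_iff, Set.mem_singleton_iff, Set.mem_univ, iff_true]
    exact hAll g
  refine ⟨hcard, ?_⟩
  -- Pisot part
  intro hpos
  set θ : ℝ := ((τ i) β).re with hθ
  have hθc : ((τ i) β) = (θ : ℂ) := Complex.ext rfl (by simpa using hreal)
  have hθabs : ‖(θ : ℂ)‖ = θ := by
    rw [Complex.norm_real, Real.norm_eq_abs, abs_of_pos hpos]
  have h1θ : 1 < θ := by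
    rw [← hθabs, ← hθc]; exact habs_i
  have hθint : IsIntegral ℤ θ := by
    have h1 : IsIntegral ℤ ((τ i) β) := hint.map (τ i).toIntAlgHom
    rw [hθc] at h1
    exact (isIntegral_algebraMap_iff (algebraMap ℝ ℂ).injective).mp h1
  refine ⟨h1θ, hθint, ?_⟩
  intro z hz hzθ
  have hmin : minpoly ℚ θ = minpoly ℚ β := by
    have h1 : minpoly ℚ ((θ : ℂ)) = minpoly ℚ θ :=
      minpoly.algebraMap_eq (algebraMap ℝ ℂ).injective θ
    have h2 : minpoly ℚ ((τ i) β) = minpoly ℚ β :=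
      minpoly.algHom_eq (τ i).toRatAlgHom (τ i).injective β
    rw [← h1, ← hθc, h2]
  rw [hmin] at hz
  have hzroot : z ∈ (minpoly ℚ β).rootSet ℂ :=
    (Polynomial.mem_rootSet).mpr ⟨minpoly.ne_zero hβQ, hz⟩
  obtain ⟨φ, hφ0⟩ := (NumberField.Embeddings.range_eval_eq_rootSet_minpoly K ℂ β).symm ▸ hzroot
  have hφ : φ β = z := hφ0
  by_contra hge
  push_neg at hge
  have hφ1 : 1 ≤ ‖φ β‖ := by rw [hφ]; exact hge
  rcases key φ hφ1 with h | h
  · apply hzθ; rw [← hφ, h, hθc]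
  · apply hzθ
    rw [← hφ, h]
    show (starRingEnd ℂ) ((τ i) β) = _
    rw [hconjreal, hθc]
end
end

section
/- Let K ⊆ ℂ be a number field and let k be a proper subfield of K. Let r_K and r_k denote the ranks of the unit groups O_K^* and O_k^* respectively. Then r_K = r_k if and only if K is a CM field and k = K ∩ ℝ. -/
set_option synthInstance.maxHeartbeats 400000
set_option maxHeartbeats 1000000

open NumberField

noncomputable section

/-- The totally real part `F = K ∩ ℝ` of a number field `K ⊆ ℂ`, as a subfield of `K`
(the subfield of elements of `K` that are real numbers). -/
def maximalRealSubfield (K : IntermediateField ℚ ℂ) : IntermediateField ℚ ↥K :=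
  Subfield.toIntermediateField
    (Subfield.comap (algebraMap ↥K ℂ) Complex.ofRealHom.fieldRange)
    (fun q => ⟨(q : ℝ), by simp [IntermediateField.algebraMap_apply]⟩)

/-- `K ⊆ ℂ` is a CM field: `K` is totally imaginary, `F = K ∩ ℝ` is totally real, and
`[K : F] = 2`. -/
def IsCMField (K : IntermediateField ℚ ℂ) : Prop :=
  (∀ φ : ↥K →+* ℂ, ∃ x : ↥K, (φ x).im ≠ 0) ∧
  (∀ φ : ↥(_root_.maximalRealSubfield K) →+* ℂ, ∀ x, (φ x).im = 0) ∧
  Module.finrank ↥(_root_.maximalRealSubfield K) ↥K = 2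

namespace RemakAux

theorem isReal_iff_im {L : Type*} [Field L] (φ : L →+* ℂ) :
    ComplexEmbedding.IsReal φ ↔ ∀ x, (φ x).im = 0 := by
  rw [ComplexEmbedding.isReal_iff]
  constructor
  · intro h x
    have := RingHom.congr_fun h x
    rw [ComplexEmbedding.conjugate_coe_eq] at this
    have h2 : (φ x).im = -(φ x).im := by simpa [Complex.ext_iff] using this.symm
    linarith
  · intro h
    ext x
    rw [ComplexEmbedding.conjugate_coe_eq]
    simp [Complex.ext_iff, h x]

theorem totImag_iff {L : Type*} [Field L] [NumberField L] :
    (∀ φ : L →+* ℂ, ∃ x, (φ x).im ≠ 0) ↔ InfinitePlace.nrRealPlaces L = 0 := by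
  classical
  rw [← InfinitePlace.card_real_embeddings, Fintype.card_eq_zero_iff]
  constructor
  · intro h
    refine ⟨fun ⟨φ, hφ⟩ => ?_⟩
    obtain ⟨x, hx⟩ := h φ
    exact hx ((isReal_iff_im φ).mp hφ x)
  · intro h φ
    by_contra hc
    push_neg at hc
    exact h.false ⟨φ, (isReal_iff_im φ).mpr hc⟩

theorem totReal_iff {L : Type*} [Field L] [NumberField L] :
    (∀ φ : L →+* ℂ, ∀ x, (φ x).im = 0) ↔ InfinitePlace.nrComplexPlaces L = 0 := by
  classical
  have h2 := InfinitePlace.card_complex_embeddings L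
  constructor
  · intro h
    have : Fintype.card { φ : L →+* ℂ // ¬ComplexEmbedding.IsReal φ } = 0 := by
      rw [Fintype.card_eq_zero_iff]
      exact ⟨fun ⟨φ, hφ⟩ => hφ ((isReal_iff_im φ).mpr (h φ))⟩
    omega
  · intro h φ
    by_contra hc
    have hne : ¬ComplexEmbedding.IsReal φ := fun hr => hc ((isReal_iff_im φ).mp hr)
    have hz : Fintype.card { φ : L →+* ℂ // ¬ComplexEmbedding.IsReal φ } = 0 := by omega
    rw [Fintype.card_eq_zero_iff] at hz
    exact hz.false ⟨φ, hne⟩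

theorem mem_mrs_iff (K : IntermediateField ℚ ℂ) (x : ↥K) :
    x ∈ _root_.maximalRealSubfield K ↔ (algebraMap ↥K ℂ x).im = 0 := by
  constructor
  · rintro ⟨r, hr⟩
    rw [← hr]; simp [Complex.ofRealHom]
  · intro h
    refine ⟨(algebraMap ↥K ℂ x).re, Complex.ext (by simp [Complex.ofRealHom]) ?_⟩
    simpa [Complex.ofRealHom] using h.symm

theorem two_le_finrank (K : IntermediateField ℚ ℂ) [NumberField ↥K] (k : IntermediateField ℚ ↥K)
    (hk : k ≠ ⊤) : 2 ≤ Module.finrank ↥k ↥K := by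
  have h0 : 0 < Module.finrank ↥k ↥K := Module.finrank_pos
  rcases Nat.lt_or_ge (Module.finrank ↥k ↥K) 2 with h | h
  · exfalso; apply hk
    have h1 : Module.finrank ↥k ↥K = 1 := by omega
    have : FiniteDimensional ↥k ↥K := FiniteDimensional.right ℚ ↥k ↥K
    apply IntermediateField.eq_of_le_of_finrank_eq' le_top
    rw [h1, IntermediateField.finrank_top]
  · exact h

end RemakAux

open RemakAux Module

/-- Remak. Let `K ⊆ ℂ` be a number field and `k` a proper subfield (in
characteristic zero any subfield contains `ℚ`). The unit groups of `O_K` and `O_k` have the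
same (Dirichlet) rank if and only if `K` is a CM field and `k = K ∩ ℝ`. -/
theorem unit_rank_eq_iff_cm_and_eq_realSubfield
    (K : IntermediateField ℚ ℂ) [NumberField ↥K]
    (k : IntermediateField ℚ ↥K) [NumberField ↥k] (hk : k ≠ ⊤) :
    NumberField.Units.rank ↥K = NumberField.Units.rank ↥k ↔
      _root_.IsCMField K ∧ k = _root_.maximalRealSubfield K := by
  have c1 : 0 < Fintype.card (InfinitePlace ↥K) := Fintype.card_pos
  constructor
  · intro h
    have c2 : 0 < Fintype.card (InfinitePlace ↥k) := Fintype.card_pos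
    simp only [NumberField.Units.rank] at h
    have hcard : Fintype.card (InfinitePlace ↥K) = Fintype.card (InfinitePlace ↥k) := by omega
    have e1 := InfinitePlace.card_add_two_mul_card_eq_rank ↥K
    have e2 := InfinitePlace.card_add_two_mul_card_eq_rank ↥k
    have e3 := InfinitePlace.card_eq_nrRealPlaces_add_nrComplexPlaces ↥K
    have e4 := InfinitePlace.card_eq_nrRealPlaces_add_nrComplexPlaces ↥k
    have hd2 : 2 ≤ finrank ↥k ↥K := two_le_finrank K k hk
    have emul : finrank ℚ ↥k * finrank ↥k ↥K = finrank ℚ ↥K :=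
      finrank_mul_finrank ℚ ↥k ↥K
    have hm1 : 0 < finrank ℚ ↥k := finrank_pos
    have hge : 2 * finrank ℚ ↥k ≤ finrank ℚ ↥K := by
      calc 2 * finrank ℚ ↥k ≤ finrank ↥k ↥K * finrank ℚ ↥k := Nat.mul_le_mul_right _ hd2
        _ = finrank ℚ ↥K := by rw [mul_comm]; exact emul
    have key : InfinitePlace.nrRealPlaces ↥K = 0 ∧ InfinitePlace.nrComplexPlaces ↥k = 0 ∧
        2 * finrank ℚ ↥k = finrank ℚ ↥K := by omega
    obtain ⟨hr1K, hr2k, hN⟩ := key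
    have hd : finrank ↥k ↥K = 2 := by
      have : finrank ℚ ↥k * finrank ↥k ↥K = finrank ℚ ↥k * 2 := by omega
      exact Nat.eq_of_mul_eq_mul_left hm1 this
    have totimag := totImag_iff.mpr hr1K
    have totreal := totReal_iff.mpr hr2k
    -- k ≤ F
    have hle : k ≤ _root_.maximalRealSubfield K := by
      intro x hx
      rw [mem_mrs_iff]
      have := totreal ((algebraMap ↥K ℂ).comp (algebraMap ↥k ↥K)) ⟨x, hx⟩
      simpa using this
    -- F ≠ ⊤
    have hFne : _root_.maximalRealSubfield K ≠ ⊤ := by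
      intro hF
      obtain ⟨x, hx⟩ := totimag (algebraMap ↥K ℂ)
      exact hx ((mem_mrs_iff K x).mp (hF ▸ IntermediateField.mem_top))
    -- finrank comparison
    have : FiniteDimensional ℚ ↥(_root_.maximalRealSubfield K) :=
      FiniteDimensional.left ℚ ↥(_root_.maximalRealSubfield K) ↥K
    have hab : finrank ℚ ↥k ≤ finrank ℚ ↥(_root_.maximalRealSubfield K) :=
      LinearMap.finrank_le_finrank_of_injective
        (f := (IntermediateField.inclusion hle).toLinearMap)
        (IntermediateField.inclusion hle).injective
    have hcF : 2 ≤ finrank ↥(_root_.maximalRealSubfield K) ↥K := two_le_finrank K _ hFne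
    have emulF : finrank ℚ ↥(_root_.maximalRealSubfield K) * finrank ↥(_root_.maximalRealSubfield K) ↥K
        = finrank ℚ ↥K := finrank_mul_finrank ℚ _ ↥K
    have hba : finrank ℚ ↥(_root_.maximalRealSubfield K) ≤ finrank ℚ ↥k := by
      nlinarith
    have hkF : k = _root_.maximalRealSubfield K :=
      IntermediateField.eq_of_le_of_finrank_eq hle (le_antisymm hab hba)
    refine ⟨⟨totimag, ?_, ?_⟩, hkF⟩
    · rw [← hkF]; exact totreal
    · rw [← hkF]; exact hd
  · rintro ⟨⟨hTI, hTR, hd⟩, rfl⟩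
    have h1 : InfinitePlace.nrRealPlaces ↥K = 0 := totImag_iff.mp hTI
    have h2 : InfinitePlace.nrComplexPlaces ↥(_root_.maximalRealSubfield K) = 0 := totReal_iff.mp hTR
    have e1 := InfinitePlace.card_add_two_mul_card_eq_rank ↥K
    have e2 := InfinitePlace.card_add_two_mul_card_eq_rank ↥(_root_.maximalRealSubfield K)
    have e3 := InfinitePlace.card_eq_nrRealPlaces_add_nrComplexPlaces ↥K
    have e4 := InfinitePlace.card_eq_nrRealPlaces_add_nrComplexPlaces ↥(_root_.maximalRealSubfield K)
    have emul : finrank ℚ ↥(_root_.maximalRealSubfield K) * finrank ↥(_root_.maximalRealSubfield K) ↥K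
        = finrank ℚ ↥K := finrank_mul_finrank ℚ _ ↥K
    rw [hd] at emul
    simp only [NumberField.Units.rank]
    omega

end
end

section
/- Let r ≥ 1 and let A be a real (r+1)×r matrix with rows A¹,…,A^{r+1} ∈ ℝ^r such that Σ_{j=1}^{r+1} A^j = 0. Let i ∈ {1,…,r+1} and assume the r×r matrix whose rows are the A^j for j ≠ i is invertible. Then there exists a nonzero vector e ∈ ℤ^r such that A^j·e < 0 for all j ≠ i and A^i·e ≤ (√r / 2)·Σ_{j=1}^{r+1} ‖A^j‖, where ‖·‖ denotes the Euclidean norm on ℝ^r and · the standard dot product. -/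
noncomputable section
open Matrix

/-- Height bound, lattice-point form. Let `A` be a real `(r+1) × r` matrix
with rows `A¹, …, A^{r+1}` summing to `0`, and let `i` be an index such that the `r × r`
matrix formed by the rows `A^j`, `j ≠ i`, is invertible (i.e. those rows are linearly
independent). Then there is a nonzero integer vector `e ∈ ℤ^r` with `A^j · e < 0` for all
`j ≠ i` and `A^i · e ≤ (√r / 2) ∑_j ‖A^j‖`, where `‖·‖` is the Euclidean norm. -/
theorem exists_integer_point_in_quadrant
    (r : ℕ) (hr : 1 ≤ r) (A : Fin (r + 1) → Fin r → ℝ)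
    (hsum : ∑ j, A j = 0) (i : Fin (r + 1))
    (hind : LinearIndependent ℝ (fun j : {j : Fin (r + 1) // j ≠ i} => A j)) :
    ∃ e : Fin r → ℤ, e ≠ 0 ∧
      (∀ j, j ≠ i → ∑ t, A j t * (e t : ℝ) < 0) ∧
      ∑ t, A i t * (e t : ℝ) ≤
        (Real.sqrt r / 2) * ∑ j, Real.sqrt (∑ t, (A j t) ^ 2) := by
  classical
  set n : Fin (r+1) → ℝ := fun j => Real.sqrt (∑ t, A j t ^ 2) with hn
  have hn0 : ∀ j, 0 ≤ n j := fun j => Real.sqrt_nonneg _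
  set M : Matrix (Fin r) (Fin r) ℝ := Matrix.of (fun k t => A (i.succAbove k) t) with hM
  have hMli : LinearIndependent ℝ (fun k : Fin r => M k) := by
    have heq : (fun k : Fin r => M k) =
        (fun j : {j : Fin (r + 1) // j ≠ i} => A j) ∘
          (fun k : Fin r => (⟨i.succAbove k, Fin.succAbove_ne i k⟩ : {j : Fin (r+1) // j ≠ i})) := rfl
    rw [heq]
    exact hind.comp _ (fun a b hab => Fin.succAbove_right_injective (congrArg Subtype.val hab))
  have hMunit : IsUnit M := Matrix.linearIndependent_rows_iff_isUnit.mp hMli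
  have hdet : IsUnit M.det := (Matrix.isUnit_iff_isUnit_det M).mp hMunit
  have hMinv : M * M⁻¹ = 1 := Matrix.mul_nonsing_inv M hdet
  have hsqr : Real.sqrt ((r : ℝ) / 4) = Real.sqrt r / 2 := by
    rw [show ((r : ℝ) / 4) = (r : ℝ) * (1/2)^2 by ring,
      Real.sqrt_mul (by positivity), Real.sqrt_sq (by norm_num)]
    ring
  -- Cauchy–Schwarz bound on the rounding error
  have hCS : ∀ (j : Fin (r+1)) (d : Fin r → ℝ), (∀ t, |d t| ≤ 1/2) →
      |∑ t, A j t * d t| ≤ n j * (Real.sqrt r / 2) := by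
    intro j d hd
    have h1 : (∑ t, A j t * d t) ^ 2 ≤ (∑ t, A j t ^ 2) * (∑ t, d t ^ 2) :=
      Finset.sum_mul_sq_le_sq_mul_sq _ _ _
    have h2 : (∑ t, d t ^ 2) ≤ (r : ℝ) / 4 := by
      calc (∑ t, d t ^ 2) ≤ ∑ _t : Fin r, (1/4 : ℝ) := by
            refine Finset.sum_le_sum fun t _ => ?_
            have := hd t
            calc d t ^ 2 = |d t| ^ 2 := (sq_abs _).symm
              _ ≤ (1/2 : ℝ) ^ 2 := by
                  exact pow_le_pow_left₀ (abs_nonneg _) this 2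
              _ = 1/4 := by norm_num
        _ = (r : ℝ) / 4 := by simp [Finset.sum_const]; ring
    have h3 : (∑ t, A j t * d t) ^ 2 ≤ (∑ t, A j t ^ 2) * ((r : ℝ) / 4) := by
      refine h1.trans (mul_le_mul_of_nonneg_left h2 ?_)
      exact Finset.sum_nonneg fun t _ => sq_nonneg _
    calc |∑ t, A j t * d t| = Real.sqrt ((∑ t, A j t * d t) ^ 2) :=
          (Real.sqrt_sq_eq_abs _).symm
      _ ≤ Real.sqrt ((∑ t, A j t ^ 2) * ((r : ℝ) / 4)) := Real.sqrt_le_sqrt h3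
      _ = n j * (Real.sqrt r / 2) := by
          rw [Real.sqrt_mul (Finset.sum_nonneg fun t _ => sq_nonneg _), hsqr, hn]
  -- the sum identity from hsum
  have hAi : ∀ t, A i t = -∑ k : Fin r, A (i.succAbove k) t := by
    intro t
    have h0 : (∑ j, A j) t = 0 := by rw [hsum]; rfl
    have h1 : ∑ j, A j t = 0 := by
      rw [← h0]; simp [Finset.sum_apply]
    have h2 := Fin.sum_univ_succAbove (fun j => A j t) i
    rw [h2] at h1
    linarith
  -- coordinate bound for the candidate vectors
  set B : Fin r → ℝ :=
    fun t => ∑ k, |M⁻¹ t k| * (Real.sqrt r / 2 * n (i.succAbove k) + 1) + 1 with hB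
  -- the per-epsilon construction
  have key : ∀ ε : ℝ, 0 < ε → ε ≤ 1 → ∃ e : Fin r → ℤ,
      (∀ t, |(e t : ℝ)| ≤ B t) ∧
      (∀ j, j ≠ i → ∑ t, A j t * (e t : ℝ) < 0) ∧
      ∑ t, A i t * (e t : ℝ) ≤ (Real.sqrt r / 2) * (∑ j, n j) + r * ε := by
    intro ε hε hε1
    set c : Fin r → ℝ := fun k => -(Real.sqrt r / 2 * n (i.succAbove k)) - ε with hc
    set x : Fin r → ℝ := M⁻¹ *ᵥ c with hx
    have hMx : ∀ k, ∑ t, A (i.succAbove k) t * x t = c k := by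
      intro k
      have : M *ᵥ x = c := by
        rw [hx, Matrix.mulVec_mulVec, hMinv, Matrix.one_mulVec]
      have := congrFun this k
      simpa [Matrix.mulVec, dotProduct, hM] using this
    refine ⟨fun t => round (x t), ?_, ?_, ?_⟩
    · -- coordinate bound
      intro t
      have hxt : |x t| ≤ B t - 1 := by
        rw [hx]
        have : (M⁻¹ *ᵥ c) t = ∑ k, M⁻¹ t k * c k := by
          simp [Matrix.mulVec, dotProduct]
        rw [this, hB]
        calc |∑ k, M⁻¹ t k * c k| ≤ ∑ k, |M⁻¹ t k * c k| := Finset.abs_sum_le_sum_abs _ _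
          _ ≤ ∑ k, |M⁻¹ t k| * (Real.sqrt r / 2 * n (i.succAbove k) + 1) := by
              refine Finset.sum_le_sum fun k _ => ?_
              rw [abs_mul]
              refine mul_le_mul_of_nonneg_left ?_ (abs_nonneg _)
              rw [hc]
              have : |-(Real.sqrt r / 2 * n (i.succAbove k)) - ε|
                  = Real.sqrt r / 2 * n (i.succAbove k) + ε := by
                rw [abs_of_nonpos (by nlinarith [hn0 (i.succAbove k), Real.sqrt_nonneg (r:ℝ)])]
                ring
              rw [this]
              linarith
          _ = (∑ k, |M⁻¹ t k| * (Real.sqrt r / 2 * n (i.succAbove k) + 1) + 1) - 1 := by ring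
      have hround : |((round (x t) : ℤ) : ℝ)| ≤ |x t| + 1 := by
        have h := abs_sub_round (x t)
        calc |((round (x t) : ℤ) : ℝ)| = |x t + (round (x t) - x t)| := by ring_nf
          _ ≤ |x t| + |round (x t) - x t| := abs_add_le _ _
          _ = |x t| + |x t - round (x t)| := by rw [abs_sub_comm]
          _ ≤ |x t| + 1 := by linarith
      linarith
    · -- negativity
      intro j hj
      obtain ⟨k, rfl⟩ := Fin.exists_succAbove_eq hj
      set d : Fin r → ℝ := fun t => ((round (x t) : ℤ) : ℝ) - x t with hd
      have hd2 : ∀ t, |d t| ≤ 1/2 := by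
        intro t; rw [hd, abs_sub_comm]; exact abs_sub_round (x t)
      have hsplit : ∑ t, A (i.succAbove k) t * ((round (x t) : ℤ) : ℝ)
          = (∑ t, A (i.succAbove k) t * x t) + ∑ t, A (i.succAbove k) t * d t := by
        rw [← Finset.sum_add_distrib]
        refine Finset.sum_congr rfl fun t _ => ?_
        rw [hd]; ring
      rw [hsplit, hMx k, hc]
      have := hCS (i.succAbove k) d hd2
      have h4 := (abs_le.mp this).2
      nlinarith [hn0 (i.succAbove k)]
    · -- upper bound for row i
      set d : Fin r → ℝ := fun t => ((round (x t) : ℤ) : ℝ) - x t with hd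
      have hd2 : ∀ t, |d t| ≤ 1/2 := by
        intro t; rw [hd, abs_sub_comm]; exact abs_sub_round (x t)
      have hsplit : ∑ t, A i t * ((round (x t) : ℤ) : ℝ)
          = (∑ t, A i t * x t) + ∑ t, A i t * d t := by
        rw [← Finset.sum_add_distrib]
        refine Finset.sum_congr rfl fun t _ => ?_
        rw [hd]; ring
      have hAix : ∑ t, A i t * x t = -∑ k, c k := by
        calc ∑ t, A i t * x t = ∑ t, (-∑ k, A (i.succAbove k) t) * x t := by
              refine Finset.sum_congr rfl fun t _ => ?_; rw [← hAi t]
          _ = -∑ t, ∑ k, A (i.succAbove k) t * x t := by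
              rw [← Finset.sum_neg_distrib]
              refine Finset.sum_congr rfl fun t _ => ?_
              rw [← Finset.sum_mul]; ring
          _ = -∑ k, ∑ t, A (i.succAbove k) t * x t := by rw [Finset.sum_comm]
          _ = -∑ k, c k := by rw [Finset.sum_congr rfl fun k _ => hMx k]
      have hsumc : -∑ k, c k = (Real.sqrt r / 2) * (∑ k, n (i.succAbove k)) + r * ε := by
        rw [hc]
        simp only [Finset.sum_sub_distrib, Finset.sum_neg_distrib, Finset.sum_const,
          Finset.card_univ, Fintype.card_fin, nsmul_eq_mul, Finset.mul_sum]
        ring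
      have hCSi := hCS i d hd2
      have h5 := (abs_le.mp hCSi).2
      have htot : ∑ j, n j = n i + ∑ k, n (i.succAbove k) :=
        Fin.sum_univ_succAbove (fun j => n j) i
      rw [hsplit, hAix, hsumc, htot]
      have : (Real.sqrt r / 2) * (n i + ∑ k, n (i.succAbove k))
          = (Real.sqrt r / 2) * n i + (Real.sqrt r / 2) * (∑ k, n (i.succAbove k)) := by ring
      rw [this]
      have h6 : ∑ t, A i t * d t ≤ n i * (Real.sqrt r / 2) := h5
      linarith [h6]
  -- pigeonhole over ε = 1/(n+1)
  choose g hg1 hg2 hg3 using fun m : ℕ =>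
    key (1/(m+1)) (by positivity) (by
      rw [div_le_one (by positivity)]; exact le_add_of_nonneg_left (Nat.cast_nonneg m))
  set N : Fin r → ℤ := fun t => ⌈B t⌉ with hN
  set S : Finset (Fin r → ℤ) := Fintype.piFinset fun t => Finset.Icc (-(N t)) (N t) with hS
  have hmem : ∀ m : ℕ, g m ∈ S := by
    intro m
    rw [hS, Fintype.mem_piFinset]
    intro t
    rw [Finset.mem_Icc]
    have h1 := hg1 m t
    have h2 : B t ≤ (N t : ℝ) := Int.le_ceil _
    have := abs_le.mp (h1.trans h2)
    constructor
    · exact_mod_cast this.1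
    · exact_mod_cast this.2
  set f : ℕ → {y // y ∈ S} := fun m => ⟨g m, hmem m⟩ with hf
  obtain ⟨y, hy⟩ := Finite.exists_infinite_fiber f
  have hfib : (f ⁻¹' {y}).Infinite := Set.infinite_coe_iff.mp hy
  obtain ⟨m₀, hm₀⟩ := hfib.nonempty
  have hgm : ∀ m, m ∈ f ⁻¹' {y} → g m = (y : Fin r → ℤ) := by
    intro m hm
    have : f m = y := hm
    exact congrArg Subtype.val this
  refine ⟨(y : Fin r → ℤ), ?_, ?_, ?_⟩
  · -- nonzero
    intro h0
    have hneg := hg2 m₀ (i.succAbove ⟨0, hr⟩) (Fin.succAbove_ne i _)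
    rw [hgm m₀ hm₀, h0] at hneg
    simp at hneg
  · intro j hj
    have := hg2 m₀ j hj
    rwa [hgm m₀ hm₀] at this
  · refine le_of_forall_pos_le_add fun η hη => ?_
    obtain ⟨m₁, hm₁⟩ := exists_nat_gt ((r : ℝ) / η)
    obtain ⟨m, hmfib, hmlt⟩ := hfib.exists_gt m₁
    have hb := hg3 m
    rw [hgm m hmfib] at hb
    refine hb.trans ?_
    have hm1 : (r : ℝ) / η < (m : ℝ) + 1 := by
      refine hm₁.trans ?_
      have : (m₁ : ℝ) < (m : ℝ) := by exact_mod_cast hmlt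
      linarith
    have : (r : ℝ) * (1 / ((m : ℝ) + 1)) ≤ η := by
      rw [div_lt_iff₀ hη] at hm1
      rw [mul_one_div, div_le_iff₀ (by positivity)]
      nlinarith
    push_cast
    linarith
end
end

section
/- Let K ⊆ ℝ be a real number field with [K : ℚ] ≥ 2. Then there exists a Pisot number β such that β is a unit of O_K (i.e. β and β⁻¹ are both algebraic integers) and K = ℚ(β). -/
open Polynomial

set_option maxHeartbeats 1000000

noncomputable section

open NumberField NumberField.InfinitePlace IntermediateField in
/-- Every real number field `K ⊆ ℝ` of degree at least `2` over `ℚ` is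
generated by a Pisot number `β` which is a unit of `O_K`, i.e. both `β` and `β⁻¹` are
algebraic integers. -/
theorem exists_pisot_unit_generator (K : IntermediateField ℚ ℝ)
    [FiniteDimensional ℚ ↥K] (h2 : 2 ≤ Module.finrank ℚ ↥K) :
    ∃ β : ℝ, IsPisotNumber β ∧ IsIntegral ℤ β ∧ IsIntegral ℤ β⁻¹ ∧
      IntermediateField.adjoin ℚ {β} = K := by
  haveI : NumberField ↥K := ⟨⟩
  -- the distinguished real embedding
  set φR : ↥K →+* ℂ := (algebraMap ℝ ℂ).comp (algebraMap ↥K ℝ) with hφRdef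
  have hφRreal : ComplexEmbedding.IsReal φR := by
    rw [ComplexEmbedding.isReal_iff]
    ext a
    simp [ComplexEmbedding.conjugate, hφRdef, Complex.conj_ofReal]
  set w : InfinitePlace ↥K := InfinitePlace.mk φR with hwdef
  have hwreal : w.IsReal := isReal_mk_iff.mpr hφRreal
  obtain ⟨u, hu⟩ := NumberField.Units.dirichletUnitTheorem.exists_unit (K := ↥K) w
  set y : ↥K := ((u : 𝓞 ↥K) : ↥K) with hydef
  have hy0 : y ≠ 0 := RingOfIntegers.coe_ne_zero_iff.mpr u.ne_zero
  have hsmall : ∀ w' : InfinitePlace ↥K, w' ≠ w → w' y < 1 := fun w' hw' =>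
    (Real.log_neg_iff (InfinitePlace.pos_iff.mpr hy0)).mp (hu w' hw')
  -- there is another infinite place
  obtain ⟨w2, hw2⟩ : ∃ w' : InfinitePlace ↥K, w' ≠ w := by
    by_contra hc
    push_neg at hc
    have hsum := NumberField.InfinitePlace.sum_mult_eq (K := ↥K)
    have huniv : (Finset.univ : Finset (InfinitePlace ↥K)) = {w} := by
      ext w'; simp [hc w']
    rw [huniv, Finset.sum_singleton] at hsum
    rw [InfinitePlace.mult, if_pos hwreal] at hsum
    omega
  -- `w y > 1` by the product formula
  have hprod : ∑ w' : InfinitePlace ↥K, (w'.mult : ℝ) * Real.log (w' y) = 0 := by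
    have h := congr_arg Real.log (prod_eq_abs_norm y)
    rw [NumberField.Units.norm, Rat.cast_one, Real.log_one, Real.log_prod] at h
    · simpa [Real.log_pow] using h
    · exact fun w' _ => pow_ne_zero _ ((InfinitePlace.pos_iff.mpr hy0).ne')
  have hwy : 1 < w y := by
    rw [← Real.log_pos_iff (InfinitePlace.pos_iff.mpr hy0).le]
    by_contra hle
    push_neg at hle
    have hterm : ∀ w' ∈ (Finset.univ : Finset (InfinitePlace ↥K)),
        ((InfinitePlace.mult w' : ℕ) : ℝ) * Real.log (w' y) ≤ 0 := by
      intro w' _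
      rcases eq_or_ne w' w with rfl | hne
      · exact mul_nonpos_of_nonneg_of_nonpos (by positivity) hle
      · exact le_of_lt (mul_neg_of_pos_of_neg
          (by exact_mod_cast InfinitePlace.mult_pos) (hu w' hne))
    have hstrict : (w2.mult : ℝ) * Real.log (w2 y) < 0 :=
      mul_neg_of_pos_of_neg (by exact_mod_cast InfinitePlace.mult_pos) (hu w2 hw2)
    have : ∑ w' : InfinitePlace ↥K, (w'.mult : ℝ) * Real.log (w' y) < 0 := by
      calc ∑ w' : InfinitePlace ↥K, (w'.mult : ℝ) * Real.log (w' y)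
          < ∑ _w' : InfinitePlace ↥K, (0 : ℝ) :=
            Finset.sum_lt_sum hterm ⟨w2, Finset.mem_univ _, by simpa using hstrict⟩
        _ = 0 := by simp
    linarith [hprod]
  -- the candidate element and its key properties
  set x : ↥K := y ^ 2 with hxdef
  have hsmallx : ∀ w' : InfinitePlace ↥K, w' ≠ w → w' x < 1 := by
    intro w' hw'
    rw [hxdef, map_pow]
    exact pow_lt_one₀ (AbsoluteValue.nonneg _ _) (hsmall w' hw') two_ne_zero
  have hwx : 1 < w x := by
    rw [hxdef, map_pow]
    exact one_lt_pow₀ hwy two_ne_zero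
  set β : ℝ := algebraMap ↥K ℝ x with hβdef
  have hφRx : φR x = (β : ℂ) := rfl
  have hwβ : w x = |β| := by
    rw [hwdef, InfinitePlace.apply, hφRx, Complex.norm_real, Real.norm_eq_abs]
  have hβpos : 0 ≤ β := by
    rw [hβdef, hxdef, map_pow]
    positivity
  have hβ1 : 1 < β := by
    rw [hwβ, abs_of_nonneg hβpos] at hwx
    exact hwx
  -- integrality of `β` and `β⁻¹`
  have hxint : IsIntegral ℤ x := by
    have h := RingOfIntegers.isIntegral_coe ((u : 𝓞 ↥K) ^ 2)
    rwa [map_pow] at h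
  have hβint : IsIntegral ℤ β := by
    have := hxint.map (algebraMap ↥K ℝ).toIntAlgHom
    simpa [hβdef] using this
  set z0 : ↥K := (((u⁻¹ : (𝓞 ↥K)ˣ) : 𝓞 ↥K) : ↥K) ^ 2 with hz0def
  have hxz0 : x * z0 = 1 := by
    rw [hxdef, hz0def, ← mul_pow, hydef]
    have : ((u : 𝓞 ↥K) : ↥K) * (((u⁻¹ : (𝓞 ↥K)ˣ) : 𝓞 ↥K) : ↥K) = 1 := by
      rw [← map_mul (algebraMap (𝓞 ↥K) ↥K), ← Units.val_mul, mul_inv_cancel, Units.val_one,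
        map_one]
    rw [this, one_pow]
  have hβinv : β⁻¹ = algebraMap ↥K ℝ z0 := by
    have : β * algebraMap ↥K ℝ z0 = 1 := by
      rw [hβdef, ← map_mul, hxz0, map_one]
    exact inv_eq_of_mul_eq_one_right this
  have hβinvint : IsIntegral ℤ β⁻¹ := by
    rw [hβinv]
    have hz0int : IsIntegral ℤ z0 := by
      have h := RingOfIntegers.isIntegral_coe (((u⁻¹ : (𝓞 ↥K)ˣ) : 𝓞 ↥K) ^ 2)
      rwa [map_pow] at h
    simpa using hz0int.map (algebraMap ↥K ℝ).toIntAlgHom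
  -- a complex embedding whose place is `w` must be `φR`
  have hmkeq : ∀ φ : ↥K →+* ℂ, InfinitePlace.mk φ = w → φ = φR := by
    intro φ hφ
    rcases InfinitePlace.mk_eq_iff.mp (hwdef ▸ hφ) with h | h
    · exact h
    · have hc : ComplexEmbedding.conjugate φR = φR := ComplexEmbedding.isReal_iff.mp hφRreal
      calc φ = ComplexEmbedding.conjugate (ComplexEmbedding.conjugate φ) := (star_star φ).symm
        _ = ComplexEmbedding.conjugate φR := by rw [h]
        _ = φR := hc
  -- Pisot property
  have hminpoly : minpoly ℚ β = minpoly ℚ x := by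
    rw [hβdef]
    exact minpoly.algebraMap_eq (algebraMap ↥K ℝ).injective x
  have hpisot : IsPisotNumber β := by
    refine ⟨hβ1, hβint, ?_⟩
    intro z hz hzne
    have hxQint : IsIntegral ℚ x := IsIntegral.of_finite ℚ x
    have hzroot : z ∈ (minpoly ℚ x).rootSet ℂ := by
      rw [Polynomial.mem_rootSet]
      exact ⟨minpoly.ne_zero hxQint, by rwa [hminpoly] at hz⟩
    rw [← NumberField.Embeddings.range_eval_eq_rootSet_minpoly ↥K ℂ x] at hzroot
    obtain ⟨φ, hφ⟩ := hzroot
    have hφx : φ x = z := hφ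
    by_cases hcase : InfinitePlace.mk φ = w
    · refine absurd ?_ hzne
      rw [← hφx, hmkeq φ hcase, hφRx]
    · have h1 : (InfinitePlace.mk φ) x < 1 := hsmallx _ hcase
      rw [InfinitePlace.apply, hφx] at h1
      exact h1
  -- generation
  have hgen : IntermediateField.adjoin ℚ {x} = (⊤ : IntermediateField ℚ ↥K) := by
    have hsplits : ∀ a : ↥K, ((minpoly ℚ a).map (algebraMap ℚ ℂ)).Splits :=
      fun a => IsAlgClosed.splits _
    set φA : ↥K →ₐ[ℚ] ℂ :=
      { toRingHom := φR, commutes' := fun r => by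
          simp [hφRdef, IsScalarTower.algebraMap_apply ℚ ↥K ℝ] } with hφAdef
    refine (Field.primitive_element_iff_algHom_eq_of_eval ℚ ℂ hsplits x φA).mpr ?_
    intro ψ hψ
    have hψR : ψ.toRingHom = φR := by
      apply hmkeq
      by_contra hne
      have hlt := hsmallx _ hne
      rw [InfinitePlace.apply] at hlt
      have heq : ψ.toRingHom x = φA x := hψ.symm
      rw [heq] at hlt
      have : ‖φA x‖ = |β| := by
        show ‖φR x‖ = |β|
        rw [hφRx, Complex.norm_real, Real.norm_eq_abs]
      rw [this, abs_of_nonneg hβpos] at hlt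
      linarith
    exact AlgHom.ext fun a => (DFunLike.congr_fun hψR a).symm
  refine ⟨β, hpisot, hβint, hβinvint, ?_⟩
  have hlift := IntermediateField.lift_adjoin_simple (F := ℚ) (E := ℝ) K x
  erw [hgen, IntermediateField.lift_top] at hlift
  have hβx : β = (x : ℝ) := rfl
  rw [hβx]
  exact hlift.symm
end
end

section
/- Let K ⊆ ℝ be a real number field. Then there exists a Pisot number β such that K = ℚ(β). -/
open Polynomial
open scoped NNReal ENNReal

noncomputable section

open NumberField NumberField.InfinitePlace NumberField.mixedEmbedding MeasureTheory in
/-- Minkowski-type existence lemma: there is a nonzero algebraic integer, primitive for `K`,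
which is small at every infinite place other than a given real place. -/
lemma exists_primitive_small_outside (K : Type*) [Field K] [NumberField K]
    {w₀ : InfinitePlace K} (hw₀ : IsReal w₀) :
    ∃ a : 𝓞 K, a ≠ 0 ∧ IntermediateField.adjoin ℚ {(a : K)} = ⊤ ∧
      ∀ w : InfinitePlace K, w ≠ w₀ → w a < 1 := by
  classical
  obtain ⟨n, hn⟩ := ENNReal.exists_nat_gt (minkowskiBound_lt_top K ↑1).ne
  set B : NNReal := (n : NNReal) with hBdef
  have hB : minkowskiBound K ↑1 < convexBodyLTFactor K * B := by
    refine hn.trans_le ?_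
    have h1 : (1 : ℝ≥0∞) ≤ (convexBodyLTFactor K : ℝ≥0∞) := by
      exact_mod_cast one_le_convexBodyLTFactor K
    calc ((n : NNReal) : ℝ≥0∞) = 1 * ((n : NNReal) : ℝ≥0∞) := by simp
    _ ≤ (convexBodyLTFactor K : ℝ≥0∞) * B := mul_le_mul_left h1 _
  have hvol : minkowskiBound K ↑1 <
      volume (convexBodyLT K (fun w ↦ if w = w₀ then B else 1)) := by
    rw [convexBodyLT_volume, ← Finset.prod_erase_mul _ _ (Finset.mem_univ w₀)]
    simp_rw [ite_pow, one_pow]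
    rw [Finset.prod_ite_eq']
    simp_rw [Finset.notMem_erase, ite_false, mult, hw₀, ite_true, one_mul, pow_one]
    exact hB
  obtain ⟨a, h_nz, h_le⟩ := exists_ne_zero_mem_ringOfIntegers_lt K hvol
  have h_lt : ∀ w : InfinitePlace K, w ≠ w₀ → w a < 1 := by
    intro w hw
    have := h_le w
    rwa [if_neg hw] at this
  exact ⟨a, h_nz, is_primitive_element_of_infinitePlace_lt h_nz
    (fun w h_ne ↦ h_lt w h_ne) (Or.inl hw₀), h_lt⟩

set_option maxHeartbeats 1000000 in
open NumberField NumberField.InfinitePlace in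
/-- Salem. Every real number field `K ⊆ ℝ` is generated over `ℚ` by a
Pisot number. -/
theorem exists_pisot_generator (K : IntermediateField ℚ ℝ) [FiniteDimensional ℚ ↥K] :
    ∃ β : ℝ, IsPisotNumber β ∧ IntermediateField.adjoin ℚ {β} = K := by
  classical
  by_cases hK : K = ⊥
  · refine ⟨2, ⟨one_lt_two, ?_, ?_⟩, ?_⟩
    · exact isIntegral_algebraMap (x := (2 : ℤ))
    · intro z hz hne
      exfalso
      apply hne
      have h2 : (2 : ℝ) = algebraMap ℚ ℝ 2 := by norm_num
      rw [h2, minpoly.eq_X_sub_C] at hz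
      simp only [map_sub, aeval_X, aeval_C] at hz
      have h3 := sub_eq_zero.mp hz
      rw [h3]
      simp
    · rw [hK]
      refine le_antisymm ?_ bot_le
      rw [IntermediateField.adjoin_le_iff]
      rintro x rfl
      exact ⟨2, by norm_num⟩
  · haveI hchar : CharZero ↥K := SubsemiringClass.instCharZero K
    haveI : NumberField ↥K := ⟨⟩
    -- the canonical real place of `K`
    set ι : ↥K →+* ℂ := Complex.ofRealHom.comp (algebraMap ↥K ℝ) with hιdef
    have hι : NumberField.ComplexEmbedding.IsReal ι := by
      rw [NumberField.ComplexEmbedding.isReal_iff]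
      ext x
      simp [hιdef, NumberField.ComplexEmbedding.conjugate, Complex.conj_ofReal]
    set w₀ : InfinitePlace ↥K := InfinitePlace.mk ι with hw₀def
    have hw₀ : IsReal w₀ := ⟨ι, hι, rfl⟩
    obtain ⟨a, ha0, hagen, halt⟩ := exists_primitive_small_outside ↥K hw₀
    -- fix the sign of the generator
    set b : 𝓞 ↥K := if 0 ≤ (algebraMap ↥K ℝ) (a : ↥K) then a else -a with hbdef
    have hbcoe : ((b : 𝓞 ↥K) : ↥K) = (a : ↥K) ∨ ((b : 𝓞 ↥K) : ↥K) = -(a : ↥K) := by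
      rw [hbdef]; split_ifs
      · exact Or.inl rfl
      · exact Or.inr (by push_cast; ring)
    have hadj_neg : IntermediateField.adjoin ℚ {-(a : ↥K)} =
        IntermediateField.adjoin ℚ {(a : ↥K)} := by
      refine le_antisymm ?_ ?_ <;> rw [IntermediateField.adjoin_le_iff] <;>
        rintro x rfl
      · exact neg_mem (IntermediateField.mem_adjoin_simple_self ℚ _)
      · have := neg_mem (IntermediateField.mem_adjoin_simple_self ℚ (-(a : ↥K)))
        simpa using this
    have hplace_neg : ∀ (w : InfinitePlace ↥K) (x : ↥K), w (-x) = w x := by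
      intro w x
      rw [← InfinitePlace.mk_embedding w, InfinitePlace.apply, InfinitePlace.apply,
        map_neg (InfinitePlace.embedding w), norm_neg]
    have hb0 : b ≠ 0 := by
      rw [hbdef]; split_ifs
      · exact ha0
      · exact neg_ne_zero.mpr ha0
    have hbgen : IntermediateField.adjoin ℚ {((b : 𝓞 ↥K) : ↥K)} = ⊤ := by
      rcases hbcoe with h | h <;> rw [h]
      · exact hagen
      · rw [hadj_neg]; exact hagen
    have hblt : ∀ w : InfinitePlace ↥K, w ≠ w₀ → w ((b : 𝓞 ↥K) : ↥K) < 1 := by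
      intro w hw
      rcases hbcoe with h | h <;> rw [h]
      · exact halt w hw
      · rw [hplace_neg]; exact halt w hw
    set θ : ℝ := (algebraMap ↥K ℝ) ((b : 𝓞 ↥K) : ↥K) with hθdef
    have hθ0 : 0 ≤ θ := by
      rw [hθdef, hbdef]; split_ifs with h
      · exact h
      · have hcoe : ((-a : 𝓞 ↥K) : ↥K) = -(a : ↥K) := by push_cast; ring
        rw [hcoe, map_neg]
        linarith [not_le.mp h]
    have hw₀b : w₀ ((b : 𝓞 ↥K) : ↥K) = θ := by
      rw [hw₀def, InfinitePlace.apply]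
      simp only [hιdef, RingHom.comp_apply, Complex.ofRealHom_eq_coe, Complex.norm_real, Real.norm_eq_abs]
      rw [abs_of_nonneg hθ0]
    -- there exists another infinite place
    have hrank : Module.finrank ℚ ↥K ≠ 1 := fun h =>
      hK (IntermediateField.finrank_eq_one_iff.mp h)
    obtain ⟨w', hw'⟩ : ∃ w' : InfinitePlace ↥K, w' ≠ w₀ := by
      by_contra h
      push_neg at h
      have huniv : (Finset.univ : Finset (InfinitePlace ↥K)) = {w₀} := by
        ext w; simp [h w]
      have hsum := InfinitePlace.sum_mult_eq (K := ↥K)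
      rw [huniv, Finset.sum_singleton] at hsum
      rw [InfinitePlace.mult, if_pos hw₀] at hsum
      exact hrank hsum.symm
    -- the product formula forces `θ > 1`
    have hposall : ∀ w : InfinitePlace ↥K, 0 < w ((b : 𝓞 ↥K) : ↥K) :=
      fun w => InfinitePlace.pos_iff.mpr (RingOfIntegers.coe_ne_zero_iff.mpr hb0)
    have hmultpos : ∀ w : InfinitePlace ↥K, InfinitePlace.mult w ≠ 0 := by
      intro w; rw [InfinitePlace.mult]; split_ifs <;> norm_num
    have hN : (1 : ℝ) ≤ |Algebra.norm ℚ ((b : 𝓞 ↥K) : ↥K)| := by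
      rw [← Algebra.coe_norm_int, ← Int.cast_one, ← Int.cast_abs, Rat.cast_intCast,
        Int.cast_le]
      exact Int.one_le_abs (Algebra.norm_ne_zero_iff.mpr hb0)
    set P : ℝ := ∏ w ∈ Finset.univ.erase w₀,
        (w ((b : 𝓞 ↥K) : ↥K)) ^ InfinitePlace.mult w with hPdef
    have hPpos : 0 < P :=
      Finset.prod_pos fun w _ => pow_pos (hposall w) _
    have hPlt : P < 1 := by
      have hmem : w' ∈ Finset.univ.erase w₀ := Finset.mem_erase.mpr ⟨hw', Finset.mem_univ _⟩
      rw [hPdef, ← Finset.mul_prod_erase _ _ hmem]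
      have h1 : (w' ((b : 𝓞 ↥K) : ↥K)) ^ InfinitePlace.mult w' < 1 :=
        pow_lt_one₀ (apply_nonneg _ _) (hblt w' hw') (hmultpos w')
      have h2 : ∏ w ∈ (Finset.univ.erase w₀).erase w',
          (w ((b : 𝓞 ↥K) : ↥K)) ^ InfinitePlace.mult w ≤ 1 := by
        refine Finset.prod_le_one (fun w _ => pow_nonneg (apply_nonneg _ _) _)
          (fun w hwmem => ?_)
        have hwne : w ≠ w₀ := (Finset.mem_erase.mp (Finset.mem_of_mem_erase hwmem)).1
        exact pow_le_one₀ (apply_nonneg _ _) (hblt w hwne).le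
      calc (w' ((b : 𝓞 ↥K) : ↥K)) ^ InfinitePlace.mult w' *
            ∏ w ∈ (Finset.univ.erase w₀).erase w',
              (w ((b : 𝓞 ↥K) : ↥K)) ^ InfinitePlace.mult w
          ≤ (w' ((b : 𝓞 ↥K) : ↥K)) ^ InfinitePlace.mult w' * 1 := by
            exact mul_le_mul_of_nonneg_left h2 (pow_nonneg (apply_nonneg _ _) _)
        _ < 1 := by rwa [mul_one]
    have hsplit : (w₀ ((b : 𝓞 ↥K) : ↥K)) ^ InfinitePlace.mult w₀ * P =
        |Algebra.norm ℚ ((b : 𝓞 ↥K) : ↥K)| := by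
      have hpr := InfinitePlace.prod_eq_abs_norm ((b : 𝓞 ↥K) : ↥K)
      rw [← Finset.mul_prod_erase _ _ (Finset.mem_univ w₀)] at hpr
      rw [hPdef]
      exact hpr
    have hθ1 : 1 < θ := by
      have hm1 : InfinitePlace.mult w₀ = 1 := by rw [InfinitePlace.mult, if_pos hw₀]
      rw [hm1, pow_one, hw₀b] at hsplit
      nlinarith [hN, hPpos, hPlt, hθ0]
    -- `θ` is an algebraic integer
    have hint : IsIntegral ℤ θ := by
      have := RingOfIntegers.isIntegral_coe b
      exact this.map (algebraMap ↥K ℝ).toIntAlgHom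
    -- the minimal polynomial of `θ`
    have hbQint : IsIntegral ℚ ((b : 𝓞 ↥K) : ↥K) := IsIntegral.of_finite ℚ _
    have hmin : minpoly ℚ θ = minpoly ℚ ((b : 𝓞 ↥K) : ↥K) := by
      rw [hθdef]
      exact minpoly.algebraMap_eq (algebraMap ↥K ℝ).injective _
    refine ⟨θ, ⟨hθ1, hint, ?_⟩, ?_⟩
    · intro z hz hne
      rw [hmin] at hz
      have hz' : z ∈ (minpoly ℚ ((b : 𝓞 ↥K) : ↥K)).rootSet ℂ := by
        rw [Polynomial.mem_rootSet]
        exact ⟨minpoly.ne_zero hbQint, hz⟩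
      rw [← NumberField.Embeddings.range_eval_eq_rootSet_minpoly ↥K ℂ] at hz'
      obtain ⟨φ, hφ⟩ := hz'
      by_cases hwφ : InfinitePlace.mk φ = w₀
      · exfalso
        apply hne
        rw [hw₀def, InfinitePlace.mk_eq_iff] at hwφ
        have hφι : φ = ι := by
          rcases hwφ with h | h
          · exact h
          · have hcc : NumberField.ComplexEmbedding.conjugate ι = ι :=
              NumberField.ComplexEmbedding.isReal_iff.mp hι
            ext x
            have hx := RingHom.congr_fun h x
            have hcx := RingHom.congr_fun hcc x
            rw [NumberField.ComplexEmbedding.conjugate_coe_eq] at hx hcx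
            rw [← hcx, ← hx, Complex.conj_conj]
        have hφ' : φ ((b : 𝓞 ↥K) : ↥K) = z := hφ
        rw [← hφ', hφι]
        rfl
      · have hφ' : φ ((b : 𝓞 ↥K) : ↥K) = z := hφ
        have habs : ‖z‖ = (InfinitePlace.mk φ) ((b : 𝓞 ↥K) : ↥K) := by
          rw [InfinitePlace.apply, hφ']
        rw [habs]
        exact hblt _ hwφ
    · have himg : (K.val : ↥K →ₐ[ℚ] ℝ) '' {((b : 𝓞 ↥K) : ↥K)} = {θ} := by
        simp [hθdef, IntermediateField.algebraMap_apply]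
      rw [← himg, ← IntermediateField.adjoin_map]
      erw [hbgen]
      ext x
      change x ∈ (K.val : ↥K →ₐ[ℚ] ℝ) '' (⊤ : IntermediateField ℚ ↥K) ↔ x ∈ K
      rw [Set.mem_image]
      constructor
      · rintro ⟨y, -, rfl⟩
        exact y.2
      · intro hx
        exact ⟨⟨x, hx⟩, IntermediateField.mem_top, rfl⟩

end
end

section
/- Let K be a number field with r = r₁ + r₂ − 1 ≥ 1. Then for every index k ∈ {1,…,r+1} there exists a unit u ∈ O_K^* with Log(u) ∈ Q_k. -/
open Polynomial NumberField

noncomputable section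

variable {K : Type*} [Field K]

/-- If `K` is a number field with unit rank `r = r₁ + r₂ - 1 ≥ 1`, then for
every index `k` there is a unit `u ∈ O_K^*` with `Log u ∈ Q_k`. -/
theorem exists_unit_logMap_mem_posQuadrant
    {K : Type*} [Field K] [NumberField K] {r₁ r₂ : ℕ}
    (σ : Fin r₁ → (K →+* ℂ)) (τ : Fin r₂ → (K →+* ℂ))
    (hsys : IsEmbeddingSystem σ τ)
    (hdeg : Module.finrank ℚ K = r₁ + 2 * r₂)
    (hr : 2 ≤ r₁ + r₂) :
    ∀ k : Fin r₁ ⊕ Fin r₂, ∃ u : (𝓞 K)ˣ,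
      LogMap σ τ ((u : 𝓞 K) : K) ∈ PosQuadrant k := by
    classical
  obtain ⟨hre, him, hbij⟩ := hsys
  set emb : Fin r₁ ⊕ (Fin r₂ ⊕ Fin r₂) → (K →+* ℂ) :=
    Sum.elim σ (Sum.elim τ (fun i => (starRingEnd ℂ).comp (τ i))) with hemb
  -- conjugate of τ i is emb (inr (inr i))
  have hconjτ : ∀ i, ComplexEmbedding.conjugate (τ i) = emb (Sum.inr (Sum.inr i)) := by
    intro i; ext x; simp [hemb, ComplexEmbedding.conjugate_coe_eq]
  have hrealσ : ∀ i, ComplexEmbedding.IsReal (σ i) := by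
    intro i
    rw [ComplexEmbedding.isReal_iff]
    ext x
    simp [ComplexEmbedding.conjugate_coe_eq, Complex.conj_eq_iff_im.mpr (hre i x)]
  have hcplxτ : ∀ i, ¬ ComplexEmbedding.IsReal (τ i) := by
    intro i h
    obtain ⟨x, hx⟩ := him i
    rw [ComplexEmbedding.isReal_iff] at h
    have := congrArg (fun φ : K →+* ℂ => (φ x).im) h
    simp [ComplexEmbedding.conjugate_coe_eq] at this
    exact hx (by linarith [this])
  set P : Fin r₁ ⊕ Fin r₂ → InfinitePlace K :=
    fun j => InfinitePlace.mk (Sum.elim σ τ j) with hP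
  have hinj := hbij.injective
  have e1 : ∀ i, σ i = emb (Sum.inl i) := fun _ => rfl
  have e2 : ∀ i, τ i = emb (Sum.inr (Sum.inl i)) := fun _ => rfl
  have hPinj : Function.Injective P := by
    intro a b hab
    rw [hP] at hab
    rcases a with a | a <;> rcases b with b | b <;>
      simp only [Sum.elim_inl, Sum.elim_inr] at hab <;>
      rcases InfinitePlace.mk_eq_iff.mp hab with h | h
    · rw [e1 a, e1 b] at h; rw [Sum.inl_injective (hinj h)]
    · rw [ComplexEmbedding.isReal_iff.mp (hrealσ a), e1 a, e1 b] at h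
      rw [Sum.inl_injective (hinj h)]
    · rw [e1 a, e2 b] at h; exact absurd (hinj h) (by simp)
    · rw [ComplexEmbedding.isReal_iff.mp (hrealσ a), e1 a, e2 b] at h
      exact absurd (hinj h) (by simp)
    · rw [e2 a, e1 b] at h; exact absurd (hinj h) (by simp)
    · rw [hconjτ a, e1 b] at h; exact absurd (hinj h) (by simp)
    · rw [e2 a, e2 b] at h
      rw [Sum.inl_injective (Sum.inr_injective (hinj h))]
    · rw [hconjτ a, e2 b] at h; exact absurd (hinj h) (by simp)
  have hPsurj : Function.Surjective P := by
    intro w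
    obtain ⟨i, hi⟩ := hbij.surjective (w.embedding)
    rcases i with i | i | i
    · refine ⟨Sum.inl i, ?_⟩
      rw [hP]; simp only [Sum.elim_inl]
      rw [show σ i = w.embedding from hi, InfinitePlace.mk_embedding]
    · refine ⟨Sum.inr i, ?_⟩
      rw [hP]; simp only [Sum.elim_inr]
      rw [show τ i = w.embedding from hi, InfinitePlace.mk_embedding]
    · refine ⟨Sum.inr i, ?_⟩
      rw [hP]; simp only [Sum.elim_inr]
      rw [← InfinitePlace.mk_embedding w, InfinitePlace.mk_eq_iff]
      right
      rw [hconjτ]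
      exact hi
  have hmult : ∀ j, (InfinitePlace.mult (P j) : ℝ) =
      Sum.elim (fun _ : Fin r₁ => (1:ℝ)) (fun _ : Fin r₂ => 2) j := by
    rintro (i | i)
    · simp [hP, InfinitePlace.mult, InfinitePlace.isReal_mk_iff.mpr (hrealσ i)]
    · simp [hP, InfinitePlace.mult, InfinitePlace.isReal_mk_iff, hcplxτ i]
  intro k
  obtain ⟨u, hu⟩ := NumberField.Units.dirichletUnitTheorem.exists_unit K (P k)
  refine ⟨u, ?_, ?_⟩
  · -- positivity at k via sum = 0
    have hx0 : ((u : 𝓞 K) : K) ≠ 0 := NumberField.Units.coe_ne_zero u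
    have hsum : ∑ j : Fin r₁ ⊕ Fin r₂, LogMap σ τ ((u : 𝓞 K) : K) j = 0 := by
      have h1 : ∑ w : InfinitePlace K,
          (InfinitePlace.mult w : ℝ) * Real.log (w ((u : 𝓞 K) : K)) = 0 := by
        have h := congrArg Real.log (InfinitePlace.prod_eq_abs_norm ((u : 𝓞 K) : K))
        rw [NumberField.Units.norm, Rat.cast_one, Real.log_one, Real.log_prod] at h
        · rw [← h]
          refine Finset.sum_congr rfl fun w _ => ?_
          rw [Real.log_pow]
        · exact fun w _ => pow_ne_zero _ ((InfinitePlace.pos_iff.mpr hx0).ne')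
      have key : ∀ j, LogMap σ τ ((u : 𝓞 K) : K) j =
          (InfinitePlace.mult (P j) : ℝ) * Real.log ((P j) ((u : 𝓞 K) : K)) := by
        intro j
        rw [hmult j]
        rcases j with i | i
        · simp [LogMap, hP, InfinitePlace.apply]
        · simp [LogMap, hP, InfinitePlace.apply]
      rw [Fintype.sum_bijective P ⟨hPinj, hPsurj⟩ _
        (fun w : InfinitePlace K => (InfinitePlace.mult w : ℝ) *
          Real.log (w ((u : 𝓞 K) : K))) key]
      exact h1
    have hne : ∃ j : Fin r₁ ⊕ Fin r₂, j ≠ k := by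
      have : 1 < Fintype.card (Fin r₁ ⊕ Fin r₂) := by
        simp only [Fintype.card_sum, Fintype.card_fin]; omega
      exact Fintype.exists_ne_of_one_lt_card this k
    have hneg : ∀ j, j ≠ k → LogMap σ τ ((u : 𝓞 K) : K) j < 0 := by
      intro j hj
      have hlog : Real.log ((P j) ((u : 𝓞 K) : K)) < 0 := hu (P j) (fun h => hj (hPinj h))
      rcases j with i | i
      · simpa [LogMap, hP, InfinitePlace.apply] using hlog
      · simp only [LogMap, Sum.elim_inr]
        have h2 : Real.log ‖τ i ((u : 𝓞 K) : K)‖ < 0 := hlog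
        linarith
    rw [Fintype.sum_eq_add_sum_compl k] at hsum
    have hs : ∑ j ∈ {k}ᶜ, LogMap σ τ ((u : 𝓞 K) : K) j < 0 := by
      obtain ⟨j, hj⟩ := hne
      refine Finset.sum_neg (fun i hi => hneg i (by simpa using hi)) ?_
      exact ⟨j, by simpa using hj⟩
    linarith
  · intro j hj
    have hlog : Real.log ((P j) ((u : 𝓞 K) : K)) < 0 := hu (P j) (fun h => hj (hPinj h))
    rcases j with i | i
    · simpa [LogMap, hP, InfinitePlace.apply] using hlog
    · simp only [LogMap, Sum.elim_inr]
      have : Real.log ‖τ i ((u : 𝓞 K) : K)‖ < 0 := hlog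
      linarith
end
end
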